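/- Let f : ℝⁿ → ℝ be locally integrable with Mf(x₀) < ∞, where M is the Hardy–Littlewood maximal operator. Suppose h_k → 0 and there exist radii r_k with Mf(x₀+h_k) equal to the average of |f| over B(x₀+h_k, r_k) and r_k → ∞. Then x₀ is a global minimum point of Mf. -/

import Mathlib

open Filter Topology MeasureTheory Metric ENNReal

/-- Average of `|f|` over the ball `B(x, r)`. -/
noncomputable def avgAbs (n : ℕ) (f : EuclideanSpace ℝ (Fin n) → ℝ)
    (x : EuclideanSpace ℝ (Fin n)) (r : ℝ) : ℝ :=
  ⨍ y in ball x r, |f y| ∂volume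

/-- The centered Hardy–Littlewood maximal function, with values in `ℝ≥0∞`. -/
noncomputable def maxFn (n : ℕ) (f : EuclideanSpace ℝ (Fin n) → ℝ)
    (x : EuclideanSpace ℝ (Fin n)) : ℝ≥0∞ :=
  ⨆ (r : ℝ) (_ : 0 < r), ENNReal.ofReal (avgAbs n f x r)

lemma ofReal_avgAbs {n : ℕ} {f : EuclideanSpace ℝ (Fin n) → ℝ}
    (hf : LocallyIntegrable f volume) (x : EuclideanSpace ℝ (Fin n)) {r : ℝ} (hr : 0 < r) :
    ENNReal.ofReal (avgAbs n f x r)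
      = (∫⁻ y in ball x r, ENNReal.ofReal |f y|) / volume (ball x r) := by
  have hint : IntegrableOn (fun y => |f y|) (ball x r) volume :=
    ((hf.integrableOn_isCompact (isCompact_closedBall x r)).mono_set
      ball_subset_closedBall).abs
  have h0 : volume (ball x r) ≠ 0 := (measure_ball_pos volume x hr).ne'
  have htop : volume (ball x r) ≠ ⊤ := measure_ball_lt_top.ne
  rw [avgAbs, setAverage_eq, smul_eq_mul, measureReal_def,
    ENNReal.ofReal_mul (inv_nonneg.2 ENNReal.toReal_nonneg),
    ofReal_integral_eq_lintegral_ofReal hint (ae_of_all _ fun y => abs_nonneg _),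
    ENNReal.ofReal_inv_of_pos (ENNReal.toReal_pos h0 htop), ENNReal.ofReal_toReal htop,
    ENNReal.div_eq_inv_mul]

lemma avgAbs_le_maxFn {n : ℕ} {f : EuclideanSpace ℝ (Fin n) → ℝ}
    (hf : LocallyIntegrable f volume) (x y : EuclideanSpace ℝ (Fin n)) {r d : ℝ}
    (hr : 0 < r) (hd : dist y x ≤ d) :
    ENNReal.ofReal (avgAbs n f y r)
      ≤ ENNReal.ofReal (((r + d) / r) ^ n) * maxFn n f x := by
  have hd0 : 0 ≤ d := le_trans dist_nonneg hd
  have hrd : 0 < r + d := by linarith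
  have hsub : ball y r ⊆ ball x (r + d) := fun z hz => by
    rw [mem_ball] at hz ⊢
    calc dist z x ≤ dist z y + dist y x := dist_triangle _ _ _
    _ < r + d := by linarith [mem_ball.1 hz]
  have hI : (∫⁻ z in ball y r, ENNReal.ofReal |f z|)
      ≤ ∫⁻ z in ball x (r + d), ENNReal.ofReal |f z| := lintegral_mono_set hsub
  set V1 := volume (ball y r) with hV1
  set V2 := volume (ball x (r + d)) with hV2
  have h10 : V1 ≠ 0 := (measure_ball_pos volume y hr).ne'
  have h1t : V1 ≠ ⊤ := measure_ball_lt_top.ne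
  have h20 : V2 ≠ 0 := (measure_ball_pos volume x hrd).ne'
  have h2t : V2 ≠ ⊤ := measure_ball_lt_top.ne
  have hVrel : V2 = ENNReal.ofReal (((r + d) / r) ^ n) * V1 := by
    rw [hV1, hV2, Measure.addHaar_ball_of_pos volume y hr,
      Measure.addHaar_ball_of_pos volume x hrd, finrank_euclideanSpace_fin,
      ← mul_assoc, ← ENNReal.ofReal_mul (by positivity)]
    congr 2
    field_simp
    rw [div_pow, div_mul_cancel₀ _ (pow_ne_zero _ hr.ne')]
  have hMx : (∫⁻ z in ball x (r + d), ENNReal.ofReal |f z|) / V2 ≤ maxFn n f x := by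
    rw [← ofReal_avgAbs hf x hrd]
    exact le_iSup₂ (f := fun s (_ : 0 < s) => ENNReal.ofReal (avgAbs n f x s)) (r + d) hrd
  have hI2 : (∫⁻ z in ball x (r + d), ENNReal.ofReal |f z|) ≤ maxFn n f x * V2 :=
    (ENNReal.div_le_iff_le_mul (Or.inl h20) (Or.inl h2t)).1 hMx
  rw [ofReal_avgAbs hf y hr]
  calc (∫⁻ z in ball y r, ENNReal.ofReal |f z|) / V1
      ≤ (maxFn n f x * V2) / V1 :=
        ENNReal.div_le_div_right (le_trans hI hI2) _
    _ = ENNReal.ofReal (((r + d) / r) ^ n) * maxFn n f x := by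
        rw [hVrel, ← mul_assoc, mul_comm (maxFn n f x), mul_div_assoc,
          ENNReal.div_self h10 h1t, mul_one]

/-- If `Mf(x₀) < ∞` and there are points `x₀ + h k → x₀` whose best radii `r k` tend to
infinity, then `x₀` is a global minimum point of `Mf`. -/
theorem global_min_of_best_radii_tendsto_infty
    (n : ℕ) (f : EuclideanSpace ℝ (Fin n) → ℝ) (hf : LocallyIntegrable f volume)
    (x₀ : EuclideanSpace ℝ (Fin n)) (hfin : maxFn n f x₀ < ⊤)
    (h : ℕ → EuclideanSpace ℝ (Fin n)) (r : ℕ → ℝ) (hr0 : ∀ k, 0 < r k)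
    (hbest : ∀ k, maxFn n f (x₀ + h k) = ENNReal.ofReal (avgAbs n f (x₀ + h k) (r k)))
    (hh : Tendsto h atTop (𝓝 0)) (hrinf : Tendsto r atTop atTop) :
    ∀ x, maxFn n f x₀ ≤ maxFn n f x := by
  intro x
  by_cases hM : maxFn n f x = ⊤
  · simp [hM]
  refine iSup₂_le fun s hs => ?_
  set e : ℕ → ℝ := fun k => dist x₀ (x₀ + h k) with he_def
  set d : ℕ → ℝ := fun k => dist (x₀ + h k) x with hd_def
  -- pointwise bound
  have hbound : ∀ k, ENNReal.ofReal (avgAbs n f x₀ s)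
      ≤ ENNReal.ofReal (((s + e k) / s) ^ n)
        * (ENNReal.ofReal (((r k + d k) / r k) ^ n) * maxFn n f x) := by
    intro k
    have h1 : ENNReal.ofReal (avgAbs n f x₀ s)
        ≤ ENNReal.ofReal (((s + e k) / s) ^ n) * maxFn n f (x₀ + h k) :=
      avgAbs_le_maxFn hf (x₀ + h k) x₀ hs le_rfl
    have h2 : maxFn n f (x₀ + h k)
        ≤ ENNReal.ofReal (((r k + d k) / r k) ^ n) * maxFn n f x := by
      rw [hbest k]
      exact avgAbs_le_maxFn hf x (x₀ + h k) (hr0 k) le_rfl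
    exact h1.trans (mul_le_mul_right h2 _)
  -- limits
  have he : Tendsto e atTop (𝓝 0) := by
    have : e = fun k => ‖h k‖ := funext fun k => by
      rw [he_def]; simp [dist_self_add_right]
    rw [this]
    simpa using hh.norm
  have hA : Tendsto (fun k => ENNReal.ofReal (((s + e k) / s) ^ n)) atTop (𝓝 1) := by
    have hre : Tendsto (fun k => ((s + e k) / s) ^ n) atTop (𝓝 1) := by
      have := (((tendsto_const_nhds (x := s)).add he).div_const s).pow n
      simpa [div_self hs.ne'] using this
    have := (ENNReal.continuous_ofReal.tendsto 1).comp hre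
    simpa [Function.comp_def] using this
  have hdlim : Tendsto d atTop (𝓝 (dist x₀ x)) := by
    have : Tendsto (fun k => x₀ + h k) atTop (𝓝 (x₀ + 0)) := tendsto_const_nhds.add hh
    simpa using this.dist (tendsto_const_nhds (x := x))
  have hB : Tendsto (fun k => ENNReal.ofReal (((r k + d k) / r k) ^ n)) atTop (𝓝 1) := by
    have hdr : Tendsto (fun k => d k / r k) atTop (𝓝 0) := hdlim.div_atTop hrinf
    have hre : Tendsto (fun k => ((r k + d k) / r k) ^ n) atTop (𝓝 1) := by
      have heq : (fun k => ((r k + d k) / r k) ^ n) = fun k => (1 + d k / r k) ^ n :=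
        funext fun k => by rw [add_div, div_self (hr0 k).ne']
      have := ((tendsto_const_nhds (x := (1:ℝ))).add hdr).pow n
      rw [heq]
      simpa using this
    have := (ENNReal.continuous_ofReal.tendsto 1).comp hre
    simpa [Function.comp_def] using this
  have hBM : Tendsto (fun k => ENNReal.ofReal (((r k + d k) / r k) ^ n) * maxFn n f x)
      atTop (𝓝 (maxFn n f x)) := by
    have := ENNReal.Tendsto.mul_const hB (Or.inr hM)
    simpa using this
  have hABM : Tendsto (fun k => ENNReal.ofReal (((s + e k) / s) ^ n)
      * (ENNReal.ofReal (((r k + d k) / r k) ^ n) * maxFn n f x))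
      atTop (𝓝 (maxFn n f x)) := by
    have := ENNReal.Tendsto.mul hA (Or.inl one_ne_zero) hBM (Or.inr ENNReal.one_ne_top)
    simpa using this
  exact ge_of_tendsto hABM (Eventually.of_forall hbound)
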